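/- Let ψ ∈ L¹(ℝ^n) satisfy ∫_{ℝ^n} |ψ(y)| |y − x₀|^ω dy ≤ A, and let B₂ be a measurable subset of the annulus { y ∈ ℝ^n : R ≤ |y − x̄| ≤ ρR } on which |ψ(y)| ≥ m/2. Then: (i) if |x̄ − x₀| > 2ρR or |x̄ − x₀| < R/2, the Lebesgue measure of B₂ satisfies |B₂| ≤ 2^{1+ω} A m^{−1} R^{−ω}; (ii) if R/2 ≤ |x̄ − x₀| ≤ 2ρR, then |B₂| ≤ ( C A R^{n−ω} m^{−1} )^{1/2} for a constant C > 0 depending only on n, ω and ρ. (Measure estimates for the level set B₂ in the proof of the height condition.) -/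

import Mathlib

open MeasureTheory Metric

/-- Chebyshev-type estimate: if `|ψ| ≥ m/2` and `‖y - x₀‖ ≥ δ` on `S`, then
`volume S ≤ 2 A m⁻¹ δ^{-ω}`. -/
lemma cheb {n : ℕ} (ω A m δ : ℝ) (hω0 : 0 < ω) (hA : 0 < A) (hm : 0 < m) (hδ : 0 < δ)
    (x₀ : EuclideanSpace ℝ (Fin n)) (ψ : EuclideanSpace ℝ (Fin n) → ℝ)
    (hint : ∫⁻ y, ENNReal.ofReal (|ψ y| * ‖y - x₀‖ ^ ω) ≤ ENNReal.ofReal A)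
    (S : Set (EuclideanSpace ℝ (Fin n))) (hS : MeasurableSet S)
    (hlo : ∀ y ∈ S, m / 2 ≤ |ψ y|) (hd : ∀ y ∈ S, δ ≤ ‖y - x₀‖) :
    volume S ≤ ENNReal.ofReal (2 * A * m⁻¹ * δ ^ (-ω)) := by
  have hc : 0 < m / 2 * δ ^ ω := by positivity
  have key : ENNReal.ofReal (m / 2 * δ ^ ω) * volume S ≤ ENNReal.ofReal A := by
    calc ENNReal.ofReal (m / 2 * δ ^ ω) * volume S
        = ∫⁻ _ in S, ENNReal.ofReal (m / 2 * δ ^ ω) := (setLIntegral_const S _).symm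
      _ ≤ ∫⁻ y in S, ENNReal.ofReal (|ψ y| * ‖y - x₀‖ ^ ω) := by
          refine lintegral_mono_ae ?_
          filter_upwards [ae_restrict_mem hS] with y hy
          refine ENNReal.ofReal_le_ofReal ?_
          have h1 := hlo y hy
          have h2 : δ ^ ω ≤ ‖y - x₀‖ ^ ω := Real.rpow_le_rpow hδ.le (hd y hy) hω0.le
          have h3 : (0:ℝ) ≤ δ ^ ω := Real.rpow_nonneg hδ.le ω
          nlinarith [abs_nonneg (ψ y)]
      _ ≤ ∫⁻ y, ENNReal.ofReal (|ψ y| * ‖y - x₀‖ ^ ω) := setLIntegral_le_lintegral S _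
      _ ≤ ENNReal.ofReal A := hint
  have h2 : volume S ≤ ENNReal.ofReal A / ENNReal.ofReal (m / 2 * δ ^ ω) := by
    rw [ENNReal.le_div_iff_mul_le (Or.inl (by simp [hc])) (Or.inl ENNReal.ofReal_ne_top)]
    rwa [mul_comm]
  refine h2.trans ?_
  rw [← ENNReal.ofReal_div_of_pos hc]
  refine ENNReal.ofReal_le_ofReal (le_of_eq ?_)
  rw [Real.rpow_neg hδ.le]
  have hδω : (0:ℝ) < δ ^ ω := Real.rpow_pos_of_pos hδ ω
  field_simp

/-- Measure estimates for the level set `B₂` in the proof of the height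
condition: if `∫ |ψ(y)| |y-x₀|^ω dy ≤ A` and `B₂` is a measurable subset of the annulus
`{R ≤ |y - x̄| ≤ ρR}` on which `|ψ| ≥ m/2`, then
(i) if `|x̄-x₀| > 2ρR` or `|x̄-x₀| < R/2`, `|B₂| ≤ 2^{1+ω} A m⁻¹ R^{-ω}`;
(ii) if `R/2 ≤ |x̄-x₀| ≤ 2ρR`, `|B₂| ≤ (C A R^{n-ω} m⁻¹)^{1/2}` for a constant `C > 0`
depending only on `n, ω, ρ`. -/
theorem statement15
    (n : ℕ) (hn : 1 ≤ n) (ω ρ : ℝ) (hω0 : 0 < ω) (hω1 : ω < 1) (hρ : 2 < ρ) :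
    ∃ C : ℝ, 0 < C ∧
      ∀ (A m R : ℝ), 0 < A → 0 < m → 0 < R →
      ∀ (x₀ xbar : EuclideanSpace ℝ (Fin n)) (ψ : EuclideanSpace ℝ (Fin n) → ℝ),
        Integrable ψ volume →
        (∫⁻ y, ENNReal.ofReal (|ψ y| * ‖y - x₀‖ ^ ω) ≤ ENNReal.ofReal A) →
      ∀ B₂ : Set (EuclideanSpace ℝ (Fin n)),
        MeasurableSet B₂ →
        (B₂ ⊆ {y | R ≤ ‖y - xbar‖ ∧ ‖y - xbar‖ ≤ ρ * R}) →
        (∀ y ∈ B₂, m / 2 ≤ |ψ y|) →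
        ((2 * ρ * R < ‖xbar - x₀‖ ∨ ‖xbar - x₀‖ < R / 2) →
          volume B₂ ≤ ENNReal.ofReal ((2 : ℝ) ^ (1 + ω) * A * m⁻¹ * R ^ (-ω))) ∧
        ((R / 2 ≤ ‖xbar - x₀‖ ∧ ‖xbar - x₀‖ ≤ 2 * ρ * R) →
          volume B₂ ≤ ENNReal.ofReal ((C * A * R ^ ((n : ℝ) - ω) * m⁻¹) ^ ((1 : ℝ) / 2))) := by
  have hvol_fin : volume (ball (0 : EuclideanSpace ℝ (Fin n)) 1) < ⊤ :=
    measure_ball_lt_top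
  have hvol_pos : 0 < volume (ball (0 : EuclideanSpace ℝ (Fin n)) 1) :=
    measure_ball_pos _ _ one_pos
  set v : ℝ := (volume (ball (0 : EuclideanSpace ℝ (Fin n)) 1)).toReal with hv_def
  have hv : 0 < v := ENNReal.toReal_pos hvol_pos.ne' hvol_fin.ne
  have hvball : volume (ball (0 : EuclideanSpace ℝ (Fin n)) 1) = ENNReal.ofReal v :=
    (ENNReal.ofReal_toReal hvol_fin.ne).symm
  have hn' : (0:ℝ) < n := by exact_mod_cast hn
  have hρ0 : (0:ℝ) < ρ := by linarith
  refine ⟨4 * (2*v) ^ (ω/n) * (v * ρ^n) ^ (1 - ω/n), by positivity, ?_⟩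
  intro A m R hA hm hR x₀ xbar ψ hψ hint B₂ hB₂ hsub hlo
  constructor
  · -- Part (i): geometric lower bound ‖y - x₀‖ ≥ R/2 on B₂
    intro hcase
    have hd : ∀ y ∈ B₂, R / 2 ≤ ‖y - x₀‖ := by
      intro y hy
      obtain ⟨h1, h2⟩ := hsub hy
      rcases hcase with h | h
      · have t : ‖xbar - x₀‖ ≤ ‖xbar - y‖ + ‖y - x₀‖ := norm_sub_le_norm_sub_add_norm_sub _ _ _
        have e : ‖xbar - y‖ = ‖y - xbar‖ := norm_sub_rev _ _
        nlinarith
      · have t : ‖y - xbar‖ ≤ ‖y - x₀‖ + ‖x₀ - xbar‖ := norm_sub_le_norm_sub_add_norm_sub _ _ _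
        have e : ‖x₀ - xbar‖ = ‖xbar - x₀‖ := norm_sub_rev _ _
        linarith
    have hch := cheb ω A m (R/2) hω0 hA hm (by linarith) x₀ ψ hint B₂ hB₂ hlo hd
    refine hch.trans (ENNReal.ofReal_le_ofReal (le_of_eq ?_))
    have h1 : ((R:ℝ)/2) ^ (-ω) = R ^ (-ω) / (2:ℝ) ^ (-ω) :=
      Real.div_rpow hR.le (by norm_num : (0:ℝ) ≤ 2) (-ω)
    have h2 : ((2:ℝ)) ^ (1+ω) = 2 * 2 ^ ω := by
      rw [Real.rpow_add (by norm_num : (0:ℝ) < 2), Real.rpow_one]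
    have h3 : ((2:ℝ)) ^ (-ω) = (2 ^ ω)⁻¹ := Real.rpow_neg (by norm_num) ω
    have h4 : (0:ℝ) < 2 ^ ω := Real.rpow_pos_of_pos two_pos ω
    rw [h1, h2, h3]
    field_simp
  · -- Part (ii): splitting argument
    intro _
    have hBsub : B₂ ⊆ closedBall xbar (ρ * R) := by
      intro y hy
      rw [mem_closedBall, dist_eq_norm]
      exact (hsub hy).2
    have hBfin : volume B₂ < ⊤ :=
      lt_of_le_of_lt (measure_mono hBsub) measure_closedBall_lt_top
    set L : ℝ := (volume B₂).toReal with hL_def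
    have hL0 : (0:ℝ) ≤ L := ENNReal.toReal_nonneg
    have hvolB : volume B₂ = ENNReal.ofReal L := (ENNReal.ofReal_toReal hBfin.ne).symm
    rcases eq_or_lt_of_le hL0 with hLz | hL
    · rw [hvolB, ← hLz]; simp
    -- Upper bound L ≤ v ρ^n R^n
    have hLle : L ≤ v * ρ^n * R^n := by
      have h1 : volume (closedBall xbar (ρ*R))
          = ENNReal.ofReal ((ρ*R) ^ n) * volume (ball (0 : EuclideanSpace ℝ (Fin n)) 1) := by
        rw [Measure.addHaar_closedBall _ _ (by positivity : (0:ℝ) ≤ ρ*R),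
          finrank_euclideanSpace_fin]
      have h2 : volume B₂ ≤ ENNReal.ofReal (v * ρ^n * R^n) := by
        refine (measure_mono hBsub).trans ?_
        rw [h1, hvball, ← ENNReal.ofReal_mul (by positivity)]
        exact ENNReal.ofReal_le_ofReal (le_of_eq (by rw [mul_pow]; ring))
      exact ENNReal.toReal_le_of_le_ofReal (by positivity) h2
    set δ : ℝ := (L / (2*v)) ^ ((1:ℝ)/n) with hδ_def
    have hδ : 0 < δ := Real.rpow_pos_of_pos (by positivity) _
    have hδn : δ ^ (n:ℕ) = L / (2*v) := by
      rw [hδ_def, ← Real.rpow_natCast ((L / (2*v)) ^ ((1:ℝ)/n)) n,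
        ← Real.rpow_mul (by positivity), one_div, inv_mul_cancel₀ hn'.ne', Real.rpow_one]
    -- near part
    have hnear : volume (B₂ ∩ closedBall x₀ δ) ≤ ENNReal.ofReal (L/2) := by
      refine (measure_mono Set.inter_subset_right).trans ?_
      rw [Measure.addHaar_closedBall _ _ hδ.le, finrank_euclideanSpace_fin, hvball,
        ← ENNReal.ofReal_mul (by positivity)]
      refine ENNReal.ofReal_le_ofReal (le_of_eq ?_)
      rw [hδn]
      field_simp
    -- far part
    have hfar : volume (B₂ \ closedBall x₀ δ) ≤ ENNReal.ofReal (2 * A * m⁻¹ * δ ^ (-ω)) := by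
      refine cheb ω A m δ hω0 hA hm hδ x₀ ψ hint _ (hB₂.diff measurableSet_closedBall)
        (fun y hy => hlo y hy.1) ?_
      intro y hy
      have h := hy.2
      rw [mem_closedBall, dist_eq_norm, not_le] at h
      exact h.le
    have hsplit : volume B₂ ≤ ENNReal.ofReal (L/2) + ENNReal.ofReal (2 * A * m⁻¹ * δ ^ (-ω)) := by
      calc volume B₂ = volume (B₂ ∩ closedBall x₀ δ) + volume (B₂ \ closedBall x₀ δ) :=
            (measure_inter_add_diff B₂ measurableSet_closedBall).symm
        _ ≤ _ := add_le_add hnear hfar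
    have hδω : (0:ℝ) < δ ^ ω := Real.rpow_pos_of_pos hδ ω
    have hLineq : L ≤ L/2 + 2 * A * m⁻¹ * δ ^ (-ω) := by
      rw [hvolB, ← ENNReal.ofReal_add (by positivity) (by positivity)] at hsplit
      exact (ENNReal.ofReal_le_ofReal_iff (by positivity)).1 hsplit
    have hkey : L * δ ^ ω ≤ 4 * A / m := by
      rw [Real.rpow_neg hδ.le] at hLineq
      have h : L / 2 ≤ 2 * A * m⁻¹ * (δ ^ ω)⁻¹ := by linarith
      calc L * δ ^ ω ≤ (2 * (2 * A * m⁻¹ * (δ ^ ω)⁻¹)) * δ ^ ω := by nlinarith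
        _ = 4 * A / m := by field_simp; ring
    -- δ^ω = L^{ω/n} / (2v)^{ω/n}
    have hδω_eq : δ ^ ω = L ^ (ω/n) / (2*v) ^ (ω/n) := by
      rw [hδ_def, ← Real.rpow_mul (by positivity), one_div, inv_mul_eq_div,
        Real.div_rpow hL0 (by positivity)]
    have h2v : (0:ℝ) < (2*v) ^ (ω/n) := Real.rpow_pos_of_pos (by positivity) _
    have hLpow : L * L ^ (ω/n) ≤ 4 * A / m * (2*v) ^ (ω/n) := by
      rw [hδω_eq] at hkey
      have e : L * L ^ (ω/n) = (L * (L ^ (ω/n) / (2*v) ^ (ω/n))) * (2*v) ^ (ω/n) := by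
        field_simp
      rw [e]
      exact mul_le_mul_of_nonneg_right hkey h2v.le
    have hexp : 0 ≤ 1 - ω/n := by
      have h : ω / n ≤ ω := by
        rw [div_le_iff₀ hn']
        have h1 : (1:ℝ) ≤ n := by exact_mod_cast hn
        nlinarith
      linarith
    have hR1 : L ^ (1 - ω/n) ≤ (v * ρ^n * R^n) ^ (1 - ω/n) :=
      Real.rpow_le_rpow hL0 hLle hexp
    have e2 : L ^ (2:ℕ) = (L * L ^ (ω/n)) * L ^ (1 - ω/n) := by
      have h : L ^ (ω/n) * L ^ (1 - ω/n) = L := by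
        rw [← Real.rpow_add hL, show ω/n + (1 - ω/n) = 1 from by ring, Real.rpow_one]
      calc L ^ (2:ℕ) = L * (L ^ (ω/n) * L ^ (1 - ω/n)) := by rw [h]; ring
        _ = (L * L ^ (ω/n)) * L ^ (1 - ω/n) := by ring
    have hRsplit : (v * ρ^n * R^n) ^ (1 - ω/n)
        = (v * ρ^n) ^ (1 - ω/n) * R ^ ((n:ℝ) - ω) := by
      rw [Real.mul_rpow (by positivity) (by positivity)]
      congr 1
      rw [← Real.rpow_natCast R n, ← Real.rpow_mul hR.le]
      congr 1
      field_simp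
    have hfinal : L ^ (2:ℕ)
        ≤ (4 * (2*v) ^ (ω/n) * (v * ρ^n) ^ (1 - ω/n)) * A * R ^ ((n:ℝ) - ω) * m⁻¹ := by
      calc L ^ (2:ℕ) = (L * L ^ (ω/n)) * L ^ (1 - ω/n) := e2
        _ ≤ (4 * A / m * (2*v) ^ (ω/n)) * ((v * ρ^n * R^n) ^ (1 - ω/n)) := by
            refine mul_le_mul hLpow hR1 (Real.rpow_nonneg hL0 _) ?_
            positivity
        _ = (4 * (2*v) ^ (ω/n) * (v * ρ^n) ^ (1 - ω/n)) * A * R ^ ((n:ℝ) - ω) * m⁻¹ := by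
            rw [hRsplit]
            field_simp
    rw [hvolB]
    refine ENNReal.ofReal_le_ofReal ?_
    calc L = (L ^ (2:ℕ)) ^ ((1:ℝ)/2) := by
          rw [← Real.rpow_natCast L 2, ← Real.rpow_mul hL0]
          norm_num
      _ ≤ ((4 * (2*v) ^ (ω/n) * (v * ρ^n) ^ (1 - ω/n)) * A * R ^ ((n:ℝ) - ω) * m⁻¹) ^ ((1:ℝ)/2) :=
          Real.rpow_le_rpow (by positivity) hfinal (by norm_num)
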